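/- For every nonzero p ∈ ℂ, the free ℂ-module with basis {L_{i,m} : i ∈ ℤ≥0, m ∈ ℤ, m ≥ −1} ∪ {J_{i,n} : i ∈ ℤ≥0, n ∈ ℤ≥0}, equipped with the ℂ-bilinear bracket determined on basis vectors by [L_{i,m}, L_{j,n}] = ((j+p)(m+1) − (i+p)(n+1))·L_{i+j,m+n}, [L_{i,m}, J_{j,n}] = (j(m+1) − (i+p)n)·J_{i+j,m+n} = −[J_{j,n}, L_{i,m}], and [J_{i,m}, J_{j,n}] = 0 (where a basis symbol whose second index is out of range is read as 0; the corresponding scalar coefficient vanishes in every such case), is a Lie algebra over ℂ: the bracket is alternating and satisfies the Jacobi identity. -/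

import Mathlib

namespace Stmt1

/-- Index set for the basis `{L_{i,m} : i ∈ ℕ, m ∈ ℤ, m ≥ −1} ∪ {J_{i,n} : i, n ∈ ℕ}`. -/
inductive Idx : Type where
  | L : (i : ℕ) → (m : ℤ) → -1 ≤ m → Idx
  | J : ℕ → ℕ → Idx

/-- `[L_{i,m}, L_{j,n}] = ((j+p)(m+1) − (i+p)(n+1))·L_{i+j,m+n}`,
read as `0` when `m+n < −1`. -/
noncomputable def strLL (p : ℂ) (i : ℕ) (m : ℤ) (j : ℕ) (n : ℤ) : Idx →₀ ℂ :=
  if h : -1 ≤ m + n then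
    Finsupp.single (Idx.L (i + j) (m + n) h)
      (((j : ℂ) + p) * ((m : ℂ) + 1) - ((i : ℂ) + p) * ((n : ℂ) + 1))
  else 0

/-- `[L_{i,m}, J_{j,n}] = (j(m+1) − (i+p)n)·J_{i+j,m+n}`, read as `0` when `m+n < 0`. -/
noncomputable def strLJ (p : ℂ) (i : ℕ) (m : ℤ) (j : ℕ) (n : ℕ) : Idx →₀ ℂ :=
  if 0 ≤ m + (n : ℤ) then
    Finsupp.single (Idx.J (i + j) (m + (n : ℤ)).toNat)
      ((j : ℂ) * ((m : ℂ) + 1) - ((i : ℂ) + p) * (n : ℂ))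
  else 0

/-- The structure constants of `A(p)` on basis vectors. -/
noncomputable def str (p : ℂ) : Idx → Idx → (Idx →₀ ℂ)
  | Idx.L i m _, Idx.L j n _ => strLL p i m j n
  | Idx.L i m _, Idx.J j n => strLJ p i m j n
  | Idx.J j n, Idx.L i m _ => -strLJ p i m j n
  | Idx.J _ _, Idx.J _ _ => 0

/-- The ℂ-bilinear extension of the structure constants to the free ℂ-module
`Idx →₀ ℂ`. -/
noncomputable def br (p : ℂ) (x y : Idx →₀ ℂ) : Idx →₀ ℂ :=
  x.sum fun a ca => y.sum fun b cb => (ca * cb) • str p a b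

/-! ### Auxiliary definitions -/

/-- Normal-form basis vector for `L`: zero when out of range. -/
noncomputable def EL (i : ℕ) (m : ℤ) : Idx →₀ ℂ :=
  if h : -1 ≤ m then Finsupp.single (Idx.L i m h) 1 else 0

/-- Normal-form basis vector for `J`: zero when out of range. -/
noncomputable def EJ (i : ℕ) (m : ℤ) : Idx →₀ ℂ :=
  if 0 ≤ m then Finsupp.single (Idx.J i m.toNat) 1 else 0

def fC (p : ℂ) (i : ℕ) (m : ℤ) (j : ℕ) (n : ℤ) : ℂ :=
  ((j : ℂ) + p) * ((m : ℂ) + 1) - ((i : ℂ) + p) * ((n : ℂ) + 1)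

def gC (p : ℂ) (i : ℕ) (m : ℤ) (j : ℕ) (n : ℤ) : ℂ :=
  (j : ℂ) * ((m : ℂ) + 1) - ((i : ℂ) + p) * (n : ℂ)

lemma L_congr {i i' : ℕ} {m m' : ℤ} (h : -1 ≤ m) (h' : -1 ≤ m')
    (hi : i = i') (hm : m = m') {c c' : ℂ} (hc : c = c') :
    Finsupp.single (Idx.L i m h) c = Finsupp.single (Idx.L i' m' h') c' := by
  subst hi; subst hm; subst hc; rfl

lemma intCast_eq_neg_one {m : ℤ} (h : m = -1) : (m : ℂ) = -1 := by
  rw [h]; norm_num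

lemma intCast_eq_zero {m : ℤ} (h : m = 0) : (m : ℂ) = 0 := by
  rw [h]; norm_num

/-- Boundary vanishing for `fC`. -/
lemma fC_bdry (p : ℂ) (i : ℕ) {m : ℤ} (j : ℕ) {n : ℤ} (hm : m = -1) (hn : n = -1) :
    fC p i m j n = 0 := by
  unfold fC
  rw [intCast_eq_neg_one hm, intCast_eq_neg_one hn]; ring

/-- Boundary vanishing for `gC`. -/
lemma gC_bdry (p : ℂ) (i : ℕ) {m : ℤ} (j : ℕ) {n : ℤ} (hm : m = -1) (hn : n = 0) :
    gC p i m j n = 0 := by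
  unfold gC
  rw [intCast_eq_neg_one hm, intCast_eq_zero hn]; ring

/-! ### Normal forms of the structure constants -/

lemma strLL_eq (p : ℂ) (i : ℕ) (m : ℤ) (j : ℕ) (n : ℤ) :
    strLL p i m j n = fC p i m j n • EL (i + j) (m + n) := by
  unfold strLL EL fC
  by_cases h : -1 ≤ m + n
  · rw [dif_pos h, dif_pos h, Finsupp.smul_single, smul_eq_mul, mul_one]
  · rw [dif_neg h, dif_neg h, smul_zero]

lemma strLJ_eq (p : ℂ) (i : ℕ) (m : ℤ) (j : ℕ) (n : ℕ) :
    strLJ p i m j n = gC p i m j (n : ℤ) • EJ (i + j) (m + (n : ℤ)) := by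
  unfold strLJ EJ gC
  by_cases h : 0 ≤ m + (n : ℤ)
  · rw [if_pos h, if_pos h, Finsupp.smul_single, smul_eq_mul, mul_one]
    push_cast
    rfl
  · rw [if_neg h, if_neg h, smul_zero]

/-! ### Bilinearity of `br` -/

lemma br_zero_left (p : ℂ) (y : Idx →₀ ℂ) : br p 0 y = 0 := by
  simp [br]

lemma br_zero_right (p : ℂ) (x : Idx →₀ ℂ) : br p x 0 = 0 := by
  simp [br]

lemma br_add_left (p : ℂ) (x x' y : Idx →₀ ℂ) :
    br p (x + x') y = br p x y + br p x' y := by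
  unfold br
  rw [Finsupp.sum_add_index'] <;> intros <;>
    simp [add_mul, add_smul, Finsupp.sum_add]

lemma br_add_right (p : ℂ) (x y y' : Idx →₀ ℂ) :
    br p x (y + y') = br p x y + br p x y' := by
  unfold br
  rw [← Finsupp.sum_add]
  apply Finsupp.sum_congr
  intro a _
  rw [Finsupp.sum_add_index'] <;> intros <;> simp [mul_add, add_smul]

lemma br_smul_left (p : ℂ) (c : ℂ) (x y : Idx →₀ ℂ) :
    br p (c • x) y = c • br p x y := by
  unfold br
  rw [Finsupp.sum_smul_index' (by intros; simp), Finsupp.smul_sum]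
  apply Finsupp.sum_congr
  intro a _
  rw [Finsupp.smul_sum]
  apply Finsupp.sum_congr
  intro b _
  rw [smul_eq_mul, mul_assoc, mul_smul]

lemma br_smul_right (p : ℂ) (c : ℂ) (x y : Idx →₀ ℂ) :
    br p x (c • y) = c • br p x y := by
  unfold br
  rw [Finsupp.smul_sum]
  apply Finsupp.sum_congr
  intro a _
  rw [Finsupp.sum_smul_index' (by intros; simp), Finsupp.smul_sum]
  apply Finsupp.sum_congr
  intro b _
  rw [smul_eq_mul, smul_smul]
  ring_nf

lemma br_neg_right (p : ℂ) (x y : Idx →₀ ℂ) : br p x (-y) = -br p x y := by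
  rw [← neg_one_smul ℂ y, br_smul_right, neg_one_smul]

lemma br_single_single (p : ℂ) (a b : Idx) (ca cb : ℂ) :
    br p (Finsupp.single a ca) (Finsupp.single b cb) = (ca * cb) • str p a b := by
  unfold br
  rw [Finsupp.sum_single_index (by simp [Finsupp.sum_single_index]),
      Finsupp.sum_single_index (by simp)]

/-! ### Skew-symmetry -/

lemma strLL_skew (p : ℂ) (i : ℕ) (m : ℤ) (j : ℕ) (n : ℤ) :
    strLL p i m j n = -strLL p j n i m := by
  unfold strLL
  by_cases h : -1 ≤ m + n
  · rw [dif_pos h, dif_pos (show -1 ≤ n + m by omega), ← Finsupp.single_neg]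
    exact L_congr h (by omega) (by omega) (by omega) (by ring)
  · rw [dif_neg h, dif_neg (show ¬ -1 ≤ n + m by omega), neg_zero]

lemma str_skew (p : ℂ) (a b : Idx) : str p a b = -str p b a := by
  cases a with
  | L i m hm =>
    cases b with
    | L j n hn => exact strLL_skew p i m j n
    | J j n => show strLJ p i m j n = - -strLJ p i m j n; rw [neg_neg]
  | J i m =>
    cases b with
    | L j n hn => rfl
    | J j n => show (0 : Idx →₀ ℂ) = -0; rw [neg_zero]

lemma br_skew (p : ℂ) (x y : Idx →₀ ℂ) : br p x y = -br p y x := by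
  calc br p x y
      = x.sum fun a ca => y.sum fun b cb => -((cb * ca) • str p b a) := by
        unfold br
        apply Finsupp.sum_congr; intro a _
        apply Finsupp.sum_congr; intro b _
        rw [str_skew p a b, mul_comm, smul_neg]
    _ = -(x.sum fun a ca => y.sum fun b cb => (cb * ca) • str p b a) := by
        simp only [Finsupp.sum, Finset.sum_neg_distrib]
    _ = -br p y x := by unfold br; rw [Finsupp.sum_comm]

/-! ### Evaluation lemmas on normal forms -/

lemma br_L_EL (p : ℂ) (i : ℕ) (m : ℤ) (hm : -1 ≤ m) (j : ℕ) (n : ℤ) (c : ℂ)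
    (hc : n < -1 → c = 0) :
    br p (Finsupp.single (Idx.L i m hm) 1) (c • EL j n)
      = (c * fC p i m j n) • EL (i + j) (m + n) := by
  unfold EL
  by_cases hn : -1 ≤ n
  · rw [dif_pos hn, Finsupp.smul_single, smul_eq_mul, mul_one, br_single_single,
      one_mul]
    show c • strLL p i m j n = _
    rw [strLL_eq, smul_smul]
    unfold EL
    rfl
  · rw [hc (by omega)]
    simp [zero_smul, zero_mul, br_zero_right]

lemma br_L_EJ (p : ℂ) (i : ℕ) (m : ℤ) (hm : -1 ≤ m) (j : ℕ) (n : ℤ) (c : ℂ)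
    (hc : n < 0 → c = 0) :
    br p (Finsupp.single (Idx.L i m hm) 1) (c • EJ j n)
      = (c * gC p i m j n) • EJ (i + j) (m + n) := by
  unfold EJ
  by_cases hn : 0 ≤ n
  · rw [if_pos hn, Finsupp.smul_single, smul_eq_mul, mul_one, br_single_single,
      one_mul]
    show c • strLJ p i m j n.toNat = _
    rw [strLJ_eq, smul_smul, Int.toNat_of_nonneg hn]
    unfold EJ
    rfl
  · rw [hc (by omega)]
    simp [zero_smul, zero_mul, br_zero_right]

lemma br_J_EL (p : ℂ) (k q : ℕ) (j : ℕ) (n : ℤ) (c : ℂ)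
    (hc : n < -1 → c = 0) :
    br p (Finsupp.single (Idx.J k q) 1) (c • EL j n)
      = (c * -gC p j n k (q : ℤ)) • EJ (j + k) (n + (q : ℤ)) := by
  unfold EL
  by_cases hn : -1 ≤ n
  · rw [dif_pos hn, Finsupp.smul_single, smul_eq_mul, mul_one, br_single_single,
      one_mul]
    show c • (-strLJ p j n k q) = _
    rw [strLJ_eq, smul_neg, smul_smul, ← neg_smul]
    ring_nf
  · rw [hc (by omega)]
    simp [zero_smul, zero_mul, br_zero_right]

lemma br_J_EJ (p : ℂ) (k q : ℕ) (j : ℕ) (n : ℤ) (c : ℂ) :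
    br p (Finsupp.single (Idx.J k q) 1) (c • EJ j n) = 0 := by
  unfold EJ
  by_cases hn : 0 ≤ n
  · rw [if_pos hn, Finsupp.smul_single, smul_eq_mul, mul_one, br_single_single]
    show _ • (0 : Idx →₀ ℂ) = 0
    rw [smul_zero]
  · rw [if_neg hn, smul_zero, br_zero_right]

lemma sL_eq (i : ℕ) (m : ℤ) (h : -1 ≤ m) :
    Finsupp.single (Idx.L i m h) (1 : ℂ) = (1 : ℂ) • EL i m := by
  rw [one_smul]; unfold EL; rw [dif_pos h]

lemma sJ_eq (i n : ℕ) :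
    Finsupp.single (Idx.J i n) (1 : ℂ) = (1 : ℂ) • EJ i (n : ℤ) := by
  rw [one_smul]; unfold EJ; rw [if_pos (by positivity), Int.toNat_natCast]

/-! ### Cyclic Jacobi sum -/

noncomputable def cyc (p : ℂ) (x y z : Idx →₀ ℂ) : Idx →₀ ℂ :=
  br p x (br p y z) + br p y (br p z x) + br p z (br p x y)

lemma cyc_rot (p : ℂ) (x y z : Idx →₀ ℂ) : cyc p x y z = cyc p y z x := by
  unfold cyc; abel

lemma cyc_swap (p : ℂ) (x y z : Idx →₀ ℂ) : cyc p x y z = -cyc p y x z := by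
  unfold cyc
  rw [show br p x z = -br p z x from br_skew p x z,
      show br p z y = -br p y z from br_skew p z y,
      show br p y x = -br p x y from br_skew p y x,
      br_neg_right, br_neg_right, br_neg_right]
  abel

lemma cyc_LLL (p : ℂ) (i : ℕ) (m : ℤ) (hm : -1 ≤ m) (j : ℕ) (n : ℤ) (hn : -1 ≤ n)
    (k : ℕ) (q : ℤ) (hq : -1 ≤ q) :
    cyc p (Finsupp.single (Idx.L i m hm) 1) (Finsupp.single (Idx.L j n hn) 1)
      (Finsupp.single (Idx.L k q hq) 1) = 0 := by
  unfold cyc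
  have h1 : br p (Finsupp.single (Idx.L j n hn) 1) (Finsupp.single (Idx.L k q hq) 1)
      = (1 * fC p j n k q) • EL (j + k) (n + q) := by
    rw [sL_eq k q hq]; exact br_L_EL p j n hn k q 1 (fun h => absurd h (by omega))
  have h2 : br p (Finsupp.single (Idx.L k q hq) 1) (Finsupp.single (Idx.L i m hm) 1)
      = (1 * fC p k q i m) • EL (k + i) (q + m) := by
    rw [sL_eq i m hm]; exact br_L_EL p k q hq i m 1 (fun h => absurd h (by omega))
  have h3 : br p (Finsupp.single (Idx.L i m hm) 1) (Finsupp.single (Idx.L j n hn) 1)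
      = (1 * fC p i m j n) • EL (i + j) (m + n) := by
    rw [sL_eq j n hn]; exact br_L_EL p i m hm j n 1 (fun h => absurd h (by omega))
  rw [h1, h2, h3,
      br_L_EL p i m hm (j + k) (n + q) _
        (fun h => by rw [fC_bdry p j k (by omega) (by omega), mul_zero]),
      br_L_EL p j n hn (k + i) (q + m) _
        (fun h => by rw [fC_bdry p k i (by omega) (by omega), mul_zero]),
      br_L_EL p k q hq (i + j) (m + n) _
        (fun h => by rw [fC_bdry p i j (by omega) (by omega), mul_zero])]
  rw [show j + (k + i) = i + (j + k) by omega, show n + (q + m) = m + (n + q) by omega,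
      show k + (i + j) = i + (j + k) by omega, show q + (m + n) = m + (n + q) by omega,
      ← add_smul, ← add_smul]
  have hz : 1 * fC p j n k q * fC p i m (j + k) (n + q)
      + 1 * fC p k q i m * fC p j n (k + i) (q + m)
      + 1 * fC p i m j n * fC p k q (i + j) (m + n) = 0 := by
    unfold fC; push_cast; ring
  rw [hz, zero_smul]

lemma cyc_LLJ (p : ℂ) (i : ℕ) (m : ℤ) (hm : -1 ≤ m) (j : ℕ) (n : ℤ) (hn : -1 ≤ n)
    (k q : ℕ) :
    cyc p (Finsupp.single (Idx.L i m hm) 1) (Finsupp.single (Idx.L j n hn) 1)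
      (Finsupp.single (Idx.J k q) 1) = 0 := by
  unfold cyc
  have h1 : br p (Finsupp.single (Idx.L j n hn) 1) (Finsupp.single (Idx.J k q) 1)
      = (1 * gC p j n k (q : ℤ)) • EJ (j + k) (n + (q : ℤ)) := by
    rw [sJ_eq k q]; exact br_L_EJ p j n hn k (q : ℤ) 1 (fun h => absurd h (by omega))
  have h2 : br p (Finsupp.single (Idx.J k q) 1) (Finsupp.single (Idx.L i m hm) 1)
      = (1 * -gC p i m k (q : ℤ)) • EJ (i + k) (m + (q : ℤ)) := by
    rw [sL_eq i m hm]; exact br_J_EL p k q i m 1 (fun h => absurd h (by omega))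
  have h3 : br p (Finsupp.single (Idx.L i m hm) 1) (Finsupp.single (Idx.L j n hn) 1)
      = (1 * fC p i m j n) • EL (i + j) (m + n) := by
    rw [sL_eq j n hn]; exact br_L_EL p i m hm j n 1 (fun h => absurd h (by omega))
  rw [h1, h2, h3,
      br_L_EJ p i m hm (j + k) (n + (q : ℤ)) _
        (fun h => by rw [gC_bdry p j k (by omega) (by omega), mul_zero]),
      br_L_EJ p j n hn (i + k) (m + (q : ℤ)) _
        (fun h => by rw [gC_bdry p i k (by omega) (by omega), neg_zero, mul_zero]),
      br_J_EL p k q (i + j) (m + n) _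
        (fun h => by rw [fC_bdry p i j (by omega) (by omega), mul_zero])]
  rw [show j + (i + k) = i + (j + k) by omega,
      show n + (m + (q : ℤ)) = m + (n + (q : ℤ)) by omega,
      show (i + j) + k = i + (j + k) by omega,
      show (m + n) + (q : ℤ) = m + (n + (q : ℤ)) by omega,
      ← add_smul, ← add_smul]
  have hz : 1 * gC p j n k (q : ℤ) * gC p i m (j + k) (n + (q : ℤ))
      + 1 * -gC p i m k (q : ℤ) * gC p j n (i + k) (m + (q : ℤ))
      + 1 * fC p i m j n * -gC p (i + j) (m + n) k (q : ℤ) = 0 := by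
    unfold fC gC; push_cast; ring
  rw [hz, zero_smul]


lemma cyc_LJJ (p : ℂ) (i : ℕ) (m : ℤ) (hm : -1 ≤ m) (j n k q : ℕ) :
    cyc p (Finsupp.single (Idx.L i m hm) 1) (Finsupp.single (Idx.J j n) 1)
      (Finsupp.single (Idx.J k q) 1) = 0 := by
  unfold cyc
  have h1 : br p (Finsupp.single (Idx.J j n) 1) (Finsupp.single (Idx.J k q) 1)
      = (0 : Idx →₀ ℂ) := by
    rw [sJ_eq k q]; exact br_J_EJ p j n k (q : ℤ) 1
  have h2 : br p (Finsupp.single (Idx.J k q) 1) (Finsupp.single (Idx.L i m hm) 1)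
      = (1 * -gC p i m k (q : ℤ)) • EJ (i + k) (m + (q : ℤ)) := by
    rw [sL_eq i m hm]; exact br_J_EL p k q i m 1 (fun h => absurd h (by omega))
  have h3 : br p (Finsupp.single (Idx.L i m hm) 1) (Finsupp.single (Idx.J j n) 1)
      = (1 * gC p i m j (n : ℤ)) • EJ (i + j) (m + (n : ℤ)) := by
    rw [sJ_eq j n]; exact br_L_EJ p i m hm j (n : ℤ) 1 (fun h => absurd h (by omega))
  rw [h1, h2, h3, br_zero_right, br_J_EJ, br_J_EJ]
  simp

lemma cyc_JJJ (p : ℂ) (i m j n k q : ℕ) :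
    cyc p (Finsupp.single (Idx.J i m) 1) (Finsupp.single (Idx.J j n) 1)
      (Finsupp.single (Idx.J k q) 1) = 0 := by
  unfold cyc
  have h : ∀ a b c d : ℕ, br p (Finsupp.single (Idx.J a b) 1)
      (Finsupp.single (Idx.J c d) 1) = (0 : Idx →₀ ℂ) := fun a b c d => by
    rw [sJ_eq c d]; exact br_J_EJ p a b c (d : ℤ) 1
  rw [h, h, h, br_zero_right, br_zero_right, br_zero_right]
  simp

lemma cyc_single (p : ℂ) (a b c : Idx) :
    cyc p (Finsupp.single a 1) (Finsupp.single b 1) (Finsupp.single c 1) = 0 := by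
  cases a with
  | L i m hm =>
    cases b with
    | L j n hn =>
      cases c with
      | L k q hq => exact cyc_LLL p i m hm j n hn k q hq
      | J k q => exact cyc_LLJ p i m hm j n hn k q
    | J j n =>
      cases c with
      | L k q hq => rw [cyc_rot, cyc_rot]; exact cyc_LLJ p k q hq i m hm j n
      | J k q => exact cyc_LJJ p i m hm j n k q
  | J i m =>
    cases b with
    | L j n hn =>
      cases c with
      | L k q hq => rw [cyc_rot]; exact cyc_LLJ p j n hn k q hq i m
      | J k q => rw [cyc_rot]; exact cyc_LJJ p j n hn k q i m
    | J j n =>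
      cases c with
      | L k q hq => rw [cyc_rot, cyc_rot]; exact cyc_LJJ p k q hq i m j n
      | J k q => exact cyc_JJJ p i m j n k q

/-! ### Trilinearity of `cyc` -/

lemma cyc_zero₁ (p : ℂ) (y z : Idx →₀ ℂ) : cyc p 0 y z = 0 := by
  unfold cyc
  rw [br_zero_left, br_zero_right, br_zero_right, br_zero_left, br_zero_right]
  simp

lemma cyc_add₁ (p : ℂ) (x x' y z : Idx →₀ ℂ) :
    cyc p (x + x') y z = cyc p x y z + cyc p x' y z := by
  unfold cyc
  rw [br_add_left p x x' (br p y z), br_add_right p z x x',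
      br_add_right p y (br p z x) (br p z x'), br_add_left p x x' y,
      br_add_right p z (br p x y) (br p x' y)]
  abel

lemma cyc_smul₁ (p : ℂ) (c : ℂ) (x y z : Idx →₀ ℂ) :
    cyc p (c • x) y z = c • cyc p x y z := by
  unfold cyc
  rw [br_smul_left p c x (br p y z), br_smul_right p c z x,
      br_smul_right p c y (br p z x), br_smul_left p c x y,
      br_smul_right p c z (br p x y), smul_add, smul_add]

lemma cyc_zero₂ (p : ℂ) (x z : Idx →₀ ℂ) : cyc p x 0 z = 0 := by
  rw [cyc_rot, cyc_zero₁]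

lemma cyc_add₂ (p : ℂ) (x y y' z : Idx →₀ ℂ) :
    cyc p x (y + y') z = cyc p x y z + cyc p x y' z := by
  rw [cyc_rot p x (y + y') z, cyc_add₁, ← cyc_rot p x y z, ← cyc_rot p x y' z]

lemma cyc_smul₂ (p : ℂ) (c : ℂ) (x y z : Idx →₀ ℂ) :
    cyc p x (c • y) z = c • cyc p x y z := by
  rw [cyc_rot, cyc_smul₁, ← cyc_rot]

lemma cyc_zero₃ (p : ℂ) (x y : Idx →₀ ℂ) : cyc p x y 0 = 0 := by
  rw [cyc_rot, cyc_zero₂]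

lemma cyc_add₃ (p : ℂ) (x y z z' : Idx →₀ ℂ) :
    cyc p x y (z + z') = cyc p x y z + cyc p x y z' := by
  rw [cyc_rot p x y (z + z'), cyc_add₂, ← cyc_rot p x y z, ← cyc_rot p x y z']

lemma cyc_smul₃ (p : ℂ) (c : ℂ) (x y z : Idx →₀ ℂ) :
    cyc p x y (c • z) = c • cyc p x y z := by
  rw [cyc_rot, cyc_smul₂, ← cyc_rot]

lemma single_eq_smul (a : Idx) (ca : ℂ) :
    Finsupp.single a ca = ca • Finsupp.single a 1 := by
  rw [Finsupp.smul_single, smul_eq_mul, mul_one]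

lemma cyc_eq_zero (p : ℂ) (x y z : Idx →₀ ℂ) : cyc p x y z = 0 := by
  induction x using Finsupp.induction_linear with
  | zero => exact cyc_zero₁ p y z
  | add f g hf hg => rw [cyc_add₁, hf, hg, add_zero]
  | single a ca =>
    induction y using Finsupp.induction_linear with
    | zero => exact cyc_zero₂ p _ z
    | add f g hf hg => rw [cyc_add₂, hf, hg, add_zero]
    | single b cb =>
      induction z using Finsupp.induction_linear with
      | zero => exact cyc_zero₃ p _ _
      | add f g hf hg => rw [cyc_add₃, hf, hg, add_zero]
      | single c cc =>
        rw [single_eq_smul a ca, single_eq_smul b cb, single_eq_smul c cc,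
            cyc_smul₁, cyc_smul₂, cyc_smul₃, cyc_single, smul_zero, smul_zero,
            smul_zero]

/-- For every nonzero `p ∈ ℂ`, the free ℂ-module with basis
`{L_{i,m}} ∪ {J_{i,n}}` equipped with the bracket `br p` is a Lie algebra over ℂ:
the bracket is alternating and satisfies the Jacobi identity. -/
theorem lie_algebra_structure (p : ℂ) (hp : p ≠ 0) :
    (∀ x : Idx →₀ ℂ, br p x x = 0) ∧
    (∀ x y z : Idx →₀ ℂ,
      br p x (br p y z) = br p (br p x y) z + br p y (br p x z)) := by
  constructor
  · intro x
    have h : br p x x + br p x x = 0 := eq_neg_iff_add_eq_zero.mp (br_skew p x x)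
    have h2 : (2 : ℂ) • br p x x = 0 := by rw [two_smul]; exact h
    rcases smul_eq_zero.mp h2 with h3 | h3
    · exact absurd h3 two_ne_zero
    · exact h3
  · intro x y z
    have h := cyc_eq_zero p x y z
    unfold cyc at h
    rw [add_assoc] at h
    have h' : br p x (br p y z)
        = -(br p y (br p z x) + br p z (br p x y)) :=
      eq_neg_of_add_eq_zero_left h
    rw [show br p (br p x y) z = -br p z (br p x y) from br_skew p (br p x y) z,
        show br p y (br p x z) = -br p y (br p z x) by
          rw [br_skew p x z, br_neg_right], h']
    abel

end Stmt1
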